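/- Let β₁ = 0 ≤ β₂ ≤ … ≤ β_{N+1} = 1, let z₁ ∼ q(·|x) and zᵢ ∼ Tᵢ(·|z_{i-1}, x) for i = 2,…,N, where each Markov kernel Tᵢ leaves the distribution with density proportional to q(z|x)^{1−βᵢ}·p(x,z)^{βᵢ} invariant. Under the assumption that each zᵢ is distributed according to this stationary distribution πᵢ, the estimator p̂ = Π_{i=1}^N (p(x,zᵢ)/q(zᵢ|x))^{β_{i+1}−βᵢ} satisfies E[log p̂] ≤ log p(x). -/

import Mathlib

open MeasureTheory Finset

/-- AIS MCO bound: with `0 = β₁ ≤ … ≤ β_{N+1} = 1` and each `zᵢ` distributed according to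
the stationary density proportional to `q^{1-βᵢ} p^{βᵢ}`, the AIS estimator
`p̂ = Π (p(zᵢ)/q(zᵢ))^{β_{i+1}-βᵢ}` satisfies `E[log p̂] ≤ log p(x)`. -/
theorem stmt_13 {Z Ω : Type*} [MeasurableSpace Z] [MeasurableSpace Ω]
    (ν : Measure Z) [SigmaFinite ν] (μ : Measure Ω) [IsProbabilityMeasure μ]
    (p q : Z → ℝ) (hp : ∀ z, 0 < p z) (hq : ∀ z, 0 < q z)
    (hpm : Measurable p) (hqm : Measurable q)
    (hqdens : ∫ z, q z ∂ν = 1)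
    (px : ℝ) (hpx : ∫ z, p z ∂ν = px) (hpxpos : 0 < px)
    (N : ℕ) (hN : 0 < N) (β : Fin (N + 1) → ℝ)
    (hβmono : Monotone β) (hβ0 : β 0 = 0) (hβlast : β (Fin.last N) = 1)
    (z : Fin N → Ω → Z) (hzm : ∀ i, Measurable (z i))
    -- each zᵢ is distributed according to the stationary distribution πᵢ with density
    -- proportional to q^{1-βᵢ} p^{βᵢ}
    (hstat : ∀ i : Fin N, Measure.map (z i) μ =
      (ENNReal.ofReal (∫ t, q t ^ (1 - β i.castSucc) * p t ^ (β i.castSucc) ∂ν))⁻¹ •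
        ν.withDensity
          (fun t => ENNReal.ofReal (q t ^ (1 - β i.castSucc) * p t ^ (β i.castSucc))))
    (hlogint : ∀ i : Fin N,
      Integrable (fun ω => Real.log (p (z i ω) / q (z i ω))) μ) :
    ∫ ω, Real.log (∏ i : Fin N,
        (p (z i ω) / q (z i ω)) ^ (β i.succ - β i.castSucc)) ∂μ ≤ Real.log px := by
  classical
  have hβ0le : ∀ j : Fin (N+1), 0 ≤ β j := fun j => hβ0 ▸ hβmono (Fin.zero_le j)
  have hβle1 : ∀ j : Fin (N+1), β j ≤ 1 := fun j => hβlast ▸ hβmono (Fin.le_last j)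
  set g : Fin (N+1) → Z → ℝ := fun j t => q t ^ (1 - β j) * p t ^ (β j) with hgdef
  have hgpos : ∀ j t, 0 < g j t := fun j t =>
    mul_pos (Real.rpow_pos_of_pos (hq t) _) (Real.rpow_pos_of_pos (hp t) _)
  have hgmeas : ∀ j, Measurable (g j) := fun j =>
    (hqm.pow measurable_const).mul (hpm.pow measurable_const)
  -- integrability of p and q
  have hip : Integrable p ν := by
    by_contra h
    rw [integral_undef h] at hpx
    exact absurd hpx.symm (ne_of_gt hpxpos)
  have hiq : Integrable q ν := by
    by_contra h
    rw [integral_undef h] at hqdens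
    exact one_ne_zero hqdens.symm
  -- integrability of the g j
  have hgint : ∀ j, Integrable (g j) ν := by
    intro j
    refine ((hiq.const_mul (1 - β j)).add (hip.const_mul (β j))).mono'
      (hgmeas j).aestronglyMeasurable ?_
    filter_upwards with t
    rw [Real.norm_of_nonneg (hgpos j t).le]
    exact Real.geom_mean_le_arith_mean2_weighted (by linarith [hβle1 j]) (hβ0le j)
      (hq t).le (hp t).le (by ring)
  set c : Fin (N+1) → ℝ := fun j => ∫ t, g j t ∂ν with hcdef
  -- positivity of the normalizing constants
  have hνpos : 0 < ν Set.univ := by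
    by_contra h
    push_neg at h
    have : ν = 0 := by
      ext s hs
      exact le_antisymm (le_trans (measure_mono (Set.subset_univ s)) h) zero_le
    rw [this] at hpx
    simp at hpx
    exact absurd hpx.symm (ne_of_gt hpxpos)
  have hcpos : ∀ j, 0 < c j := by
    intro j
    rw [hcdef]
    refine (integral_pos_iff_support_of_nonneg (fun t => (hgpos j t).le) (hgint j)).2 ?_
    have : Function.support (g j) = Set.univ := by
      ext t; simp [Function.mem_support, (hgpos j t).ne']
    rw [this]; exact hνpos
  -- endpoints
  have hc0 : c 0 = 1 := by
    have : ∀ t, g 0 t = q t := by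
      intro t
      simp [hgdef, hβ0, Real.rpow_zero, Real.rpow_one]
    simp only [hcdef]
    rw [show (fun t => g 0 t) = q from funext this]
    exact hqdens
  have hclast : c (Fin.last N) = px := by
    have : ∀ t, g (Fin.last N) t = p t := by
      intro t
      simp [hgdef, hβlast, Real.rpow_zero, Real.rpow_one]
    simp only [hcdef]
    rw [show (fun t => g (Fin.last N) t) = p from funext this]
    exact hpx
  -- the key per-step bound
  have key : ∀ i : Fin N,
      ∫ ω, (β i.succ - β i.castSucc) * Real.log (p (z i ω) / q (z i ω)) ∂μ
        ≤ Real.log (c i.succ) - Real.log (c i.castSucc) := by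
    intro i
    set a : Fin (N+1) := i.castSucc
    set b : Fin (N+1) := i.succ
    have hflm : Measurable fun t => Real.log (p t / q t) := (hpm.div hqm).log
    -- rewrite the stationary measure with an ℝ≥0-valued density
    have hstat' : Measure.map (z i) μ =
        (ENNReal.ofReal (c a))⁻¹ •
          ν.withDensity (fun t => ((g a t).toNNReal : ENNReal)) := by
      rw [hstat i]
      rfl
    have hca := hcpos a
    have hcb := hcpos b
    have hofne : (ENNReal.ofReal (c a))⁻¹ ≠ 0 := by
      simp [ENNReal.ofReal_ne_top]
    have hofnetop : (ENNReal.ofReal (c a))⁻¹ ≠ ⊤ := by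
      simp [ENNReal.ofReal_pos.2 hca, (ENNReal.ofReal_pos.2 hca).ne']
    have hgnn : Measurable fun t => (g a t).toNNReal :=
      (hgmeas a).real_toNNReal
    -- transfer the expectation to an integral over ν
    have hmap : ∫ ω, Real.log (p (z i ω) / q (z i ω)) ∂μ
        = (c a)⁻¹ * ∫ t, g a t * Real.log (p t / q t) ∂ν := by
      have h1 : ∫ ω, Real.log (p (z i ω) / q (z i ω)) ∂μ
          = ∫ t, Real.log (p t / q t) ∂(Measure.map (z i) μ) :=
        (integral_map (hzm i).aemeasurable hflm.aestronglyMeasurable).symm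
      rw [h1, hstat', integral_smul_measure, integral_withDensity_eq_integral_smul hgnn]
      have h2 : ((ENNReal.ofReal (c a))⁻¹).toReal = (c a)⁻¹ := by
        rw [ENNReal.toReal_inv, ENNReal.toReal_ofReal hca.le]
      rw [h2]
      congr 1
      refine integral_congr_ae (Filter.Eventually.of_forall fun t => ?_)
      simp [NNReal.smul_def, Real.coe_toNNReal _ (hgpos a t).le]
    -- integrability of g a * log (p/q) over ν
    have hFint : Integrable (fun t => g a t * Real.log (p t / q t)) ν := by
      have h1 : Integrable (fun t => Real.log (p t / q t)) (Measure.map (z i) μ) := by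
        rw [integrable_map_measure hflm.aestronglyMeasurable (hzm i).aemeasurable]
        exact hlogint i
      rw [hstat', integrable_smul_measure hofne hofnetop,
        integrable_withDensity_iff_integrable_smul hgnn] at h1
      refine h1.congr (Filter.Eventually.of_forall fun t => ?_)
      simp [NNReal.smul_def, Real.coe_toNNReal _ (hgpos a t).le]
    -- the ratio identity
    have hratio : ∀ t, g b t = g a t * (p t / q t) ^ (β b - β a) := by
      intro t
      have h1 : q t ^ ((1:ℝ) - β a) * q t ^ (β a - β b) = q t ^ ((1:ℝ) - β b) := by
        rw [← Real.rpow_add (hq t)]; congr 1; ring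
      have h2 : p t ^ (β a) * p t ^ (β b - β a) = p t ^ (β b) := by
        rw [← Real.rpow_add (hp t)]; congr 1; ring
      have h3 : (p t / q t) ^ (β b - β a) = p t ^ (β b - β a) * q t ^ (β a - β b) := by
        rw [Real.div_rpow (hp t).le (hq t).le, show β a - β b = -(β b - β a) by ring,
          Real.rpow_neg (hq t).le, div_eq_mul_inv]
      calc g b t = q t ^ ((1:ℝ) - β b) * p t ^ (β b) := rfl
        _ = (q t ^ ((1:ℝ) - β a) * q t ^ (β a - β b)) * (p t ^ (β a) * p t ^ (β b - β a)) := by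
            rw [h1, h2]
        _ = g a t * (p t / q t) ^ (β b - β a) := by rw [h3]; unfold g; ring
    -- pointwise Gibbs-type bound
    have hpt : ∀ t, g a t * ((β b - β a) * Real.log (p t / q t)
          + (Real.log (c a) - Real.log (c b)))
        ≤ (c a / c b) * g b t - g a t := by
      intro t
      have hga := hgpos a t
      have hgb := hgpos b t
      have hxpos : 0 < (g b t / c b) / (g a t / c a) :=
        div_pos (div_pos hgb hcb) (div_pos hga hca)
      have hlog := Real.log_le_sub_one_of_pos hxpos
      have hlogx : Real.log ((g b t / c b) / (g a t / c a))
          = (β b - β a) * Real.log (p t / q t) + (Real.log (c a) - Real.log (c b)) := by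
        rw [Real.log_div (div_pos hgb hcb).ne' (div_pos hga hca).ne',
          Real.log_div hgb.ne' hcb.ne', Real.log_div hga.ne' hca.ne']
        have : Real.log (g b t) = Real.log (g a t)
            + (β b - β a) * Real.log (p t / q t) := by
          rw [hratio t, Real.log_mul hga.ne'
            (Real.rpow_pos_of_pos (div_pos (hp t) (hq t)) _).ne',
            Real.log_rpow (div_pos (hp t) (hq t))]
        rw [this]; ring
      rw [← hlogx]
      have hx : g a t * ((g b t / c b) / (g a t / c a)) = (c a / c b) * g b t := by
        field_simp
      calc g a t * Real.log ((g b t / c b) / (g a t / c a))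
          ≤ g a t * ((g b t / c b) / (g a t / c a) - 1) := by
            exact mul_le_mul_of_nonneg_left hlog hga.le
        _ = (c a / c b) * g b t - g a t := by rw [mul_sub, hx]; ring
    -- integrate the pointwise bound
    have hint1 : Integrable (fun t => g a t * ((β b - β a) * Real.log (p t / q t)
          + (Real.log (c a) - Real.log (c b)))) ν := by
      have : Integrable (fun t => (β b - β a) * (g a t * Real.log (p t / q t))
          + (Real.log (c a) - Real.log (c b)) * g a t) ν :=
        (hFint.const_mul _).add ((hgint a).const_mul _)
      refine this.congr (Filter.Eventually.of_forall fun t => ?_)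
      ring
    have hint2 : Integrable (fun t => (c a / c b) * g b t - g a t) ν :=
      ((hgint b).const_mul _).sub (hgint a)
    have hineq := integral_mono hint1 hint2 hpt
    have hL : ∫ t, g a t * ((β b - β a) * Real.log (p t / q t)
          + (Real.log (c a) - Real.log (c b))) ∂ν
        = (β b - β a) * ∫ t, g a t * Real.log (p t / q t) ∂ν
          + (Real.log (c a) - Real.log (c b)) * c a := by
      have : ∀ t, g a t * ((β b - β a) * Real.log (p t / q t)
            + (Real.log (c a) - Real.log (c b)))
          = (β b - β a) * (g a t * Real.log (p t / q t))
            + (Real.log (c a) - Real.log (c b)) * g a t := fun t => by ring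
      rw [integral_congr_ae (Filter.Eventually.of_forall this),
        integral_add (hFint.const_mul _) ((hgint a).const_mul _),
        integral_const_mul, integral_const_mul]
    have hR : ∫ t, (c a / c b) * g b t - g a t ∂ν = 0 := by
      rw [integral_sub ((hgint b).const_mul _) (hgint a), integral_const_mul]
      have : c a / c b * c b = c a := div_mul_cancel₀ _ hcb.ne'
      rw [hcdef] at this ⊢
      simp only []
      rw [this]
      ring
    rw [hL, hR] at hineq
    rw [integral_const_mul, hmap]
    have hF := (mul_le_mul_of_nonneg_right hineq (le_of_lt (inv_pos.2 hca)))
    rw [zero_mul] at hF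
    have hE : ((β b - β a) * (∫ t, g a t * Real.log (p t / q t) ∂ν)
        + (Real.log (c a) - Real.log (c b)) * c a) * (c a)⁻¹
        = (β b - β a) * ((c a)⁻¹ * ∫ t, g a t * Real.log (p t / q t) ∂ν)
          + (Real.log (c a) - Real.log (c b)) := by
      field_simp
    rw [hE] at hF
    linarith
  -- rewrite log of the product as a sum
  have hlogprod : ∀ ω, Real.log (∏ i : Fin N,
        (p (z i ω) / q (z i ω)) ^ (β i.succ - β i.castSucc))
      = ∑ i : Fin N, (β i.succ - β i.castSucc) * Real.log (p (z i ω) / q (z i ω)) := by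
    intro ω
    rw [Real.log_prod (fun i _ =>
      (Real.rpow_pos_of_pos (div_pos (hp _) (hq _)) _).ne')]
    exact Finset.sum_congr rfl fun i _ =>
      Real.log_rpow (div_pos (hp _) (hq _)) _
  have hsumint : ∫ ω, ∑ i : Fin N,
        (β i.succ - β i.castSucc) * Real.log (p (z i ω) / q (z i ω)) ∂μ
      = ∑ i : Fin N, ∫ ω,
        (β i.succ - β i.castSucc) * Real.log (p (z i ω) / q (z i ω)) ∂μ :=
    integral_finset_sum _ (fun i _ => (hlogint i).const_mul _)
  rw [integral_congr_ae (Filter.Eventually.of_forall hlogprod), hsumint]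
  -- telescope
  have htel : ∑ i : Fin N, (Real.log (c i.succ) - Real.log (c i.castSucc))
      = Real.log px := by
    set L : ℕ → ℝ := fun k => Real.log (c ⟨min k N, by omega⟩) with hLdef
    have h1 : ∀ i : Fin N, Real.log (c i.succ) - Real.log (c i.castSucc)
        = L (↑i + 1) - L ↑i := by
      intro i
      have hi := i.isLt
      have e1 : (⟨min (↑i + 1) N, by omega⟩ : Fin (N+1)) = i.succ := by
        apply Fin.ext; simp [Nat.min_eq_left hi]
      have e2 : (⟨min (↑i : ℕ) N, by omega⟩ : Fin (N+1)) = i.castSucc := by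
        apply Fin.ext; simp [Nat.min_eq_left hi.le]
      simp only [hLdef, e1, e2]
    rw [Finset.sum_congr rfl (fun i _ => h1 i)]
    rw [Fin.sum_univ_eq_sum_range (fun k => L (k + 1) - L k) N,
      Finset.sum_range_sub L N]
    have eN : (⟨min N N, by omega⟩ : Fin (N+1)) = Fin.last N := by
      apply Fin.ext; simp
    have e0 : (⟨min 0 N, by omega⟩ : Fin (N+1)) = 0 := by
      apply Fin.ext; simp
    simp only [hLdef, eN, e0, hclast, hc0, Real.log_one, sub_zero]
  rw [← htel]
  exact Finset.sum_le_sum fun i _ => key i
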